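/- In the strong weighted adversary bound applied to the multi-chain problem on n strings of k bits each with prefix-verification queries, using weights w(x,y) = 1 iff Hamming distance d(x,y) = 1, one has μ(x) = nk for all inputs x, and ν(x,q) ≤ k for all x and queries q; hence the adversary ratio min √(μ(x)μ(y)/(ν(x,q)ν(y,q))) over pairs with w(x,y) > 0 and ξ(x,q) ≠ ξ(y,q) equals n√k. -/

import Mathlib

open Classical

/-- A prefix-verification query for the multi-chain problem: row `i`,
prefix length `t` with `1 ≤ t ≤ k`, and a candidate prefix `s`. -/
structure MCQuery (n k : ℕ) where
  i : Fin n
  t : ℕ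
  ht1 : 1 ≤ t
  ht2 : t ≤ k
  s : Fin t → Bool

/-- The query answer: `s` is a prefix of row `i` of `x`. -/
def mcXi {n k : ℕ} (x : Fin n → Fin k → Bool) (q : MCQuery n k) : Prop :=
  ∀ j : Fin q.t, x q.i ⟨j, lt_of_lt_of_le j.isLt q.ht2⟩ = q.s j

/-- Hamming distance between inputs. -/
def mcHam {n k : ℕ} (x y : Fin n → Fin k → Bool) : ℕ :=
  (Finset.univ.filter (fun p : Fin n × Fin k => x p.1 p.2 ≠ y p.1 p.2)).card

noncomputable def mcW {n k : ℕ} (x y : Fin n → Fin k → Bool) : ℕ :=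
  if mcHam x y = 1 then 1 else 0

noncomputable def mcW' {n k : ℕ} (x y : Fin n → Fin k → Bool) (q : MCQuery n k) : ℕ :=
  if mcHam x y = 1 ∧ ¬(mcXi x q ↔ mcXi y q) then 1 else 0

noncomputable def mcMu {n k : ℕ} (x : Fin n → Fin k → Bool) : ℕ :=
  ∑ y : Fin n → Fin k → Bool, mcW x y

noncomputable def mcNu {n k : ℕ} (x : Fin n → Fin k → Bool) (q : MCQuery n k) : ℕ :=
  ∑ y : Fin n → Fin k → Bool, mcW' x y q



def mcFlip {n k : ℕ} (x : Fin n → Fin k → Bool) (p : Fin n × Fin k) :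
    Fin n → Fin k → Bool :=
  fun a b => if a = p.1 ∧ b = p.2 then !(x a b) else x a b

lemma mcFlip_ne {n k : ℕ} {x : Fin n → Fin k → Bool} {p : Fin n × Fin k}
    {a : Fin n} {b : Fin k} (h : mcFlip x p a b ≠ x a b) : a = p.1 ∧ b = p.2 := by
  by_contra hc
  simp [mcFlip, hc] at h

lemma mcFlip_diffset {n k : ℕ} (x : Fin n → Fin k → Bool) (p : Fin n × Fin k) :
    (Finset.univ.filter (fun z : Fin n × Fin k => x z.1 z.2 ≠ mcFlip x p z.1 z.2)) = {p} := by
  ext z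
  simp only [Finset.mem_filter, Finset.mem_univ, true_and, Finset.mem_singleton, mcFlip]
  constructor
  · intro h
    by_contra hz
    have : ¬ (z.1 = p.1 ∧ z.2 = p.2) := by
      intro hh; exact hz (Prod.ext hh.1 hh.2)
    simp [this] at h
  · rintro rfl
    simp

lemma mcHam_flip {n k : ℕ} (x : Fin n → Fin k → Bool) (p : Fin n × Fin k) :
    mcHam x (mcFlip x p) = 1 := by
  rw [mcHam, mcFlip_diffset]; simp

lemma mcHam_one_iff {n k : ℕ} {x y : Fin n → Fin k → Bool} :
    mcHam x y = 1 ↔ ∃ p, y = mcFlip x p := by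
  constructor
  · intro h
    obtain ⟨p, hp⟩ := Finset.card_eq_one.1 h
    refine ⟨p, ?_⟩
    funext a b
    by_cases hab : (a, b) = p
    · have : (a, b) ∈ (Finset.univ.filter
          (fun z : Fin n × Fin k => x z.1 z.2 ≠ y z.1 z.2)) := by
        rw [hp]; simpa using hab
      simp only [Finset.mem_filter] at this
      have hne : x a b ≠ y a b := this.2
      subst hab
      simp only [mcFlip, and_self, if_true]
      cases hx : x a b <;> cases hy : y a b <;> simp_all
    · have : (a, b) ∉ (Finset.univ.filter
          (fun z : Fin n × Fin k => x z.1 z.2 ≠ y z.1 z.2)) := by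
        rw [hp]; simpa using hab
      simp only [Finset.mem_filter, Finset.mem_univ, true_and, not_not] at this
      have hcond : ¬ (a = p.1 ∧ b = p.2) := by
        intro hh; exact hab (Prod.ext hh.1 hh.2)
      simp [mcFlip, hcond, this]
  · rintro ⟨p, rfl⟩; exact mcHam_flip x p

lemma mcFlip_inj {n k : ℕ} (x : Fin n → Fin k → Bool) :
    Function.Injective (mcFlip x) := by
  intro p p' h
  by_contra hne
  have h1 : mcFlip x p p.1 p.2 = !(x p.1 p.2) := by simp [mcFlip]
  have hcond : ¬ (p.1 = p'.1 ∧ p.2 = p'.2) := by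
    intro hh; exact hne (Prod.ext hh.1 hh.2)
  have h2 : mcFlip x p' p.1 p.2 = x p.1 p.2 := by simp [mcFlip, hcond]
  rw [h] at h1; rw [h2] at h1
  cases x p.1 p.2 <;> simp_all

lemma mcHam_comm {n k : ℕ} (x y : Fin n → Fin k → Bool) : mcHam x y = mcHam y x := by
  unfold mcHam; congr 1; ext z; simp [ne_comm]

lemma mcXi_iff_of_agree {n k : ℕ} {x y : Fin n → Fin k → Bool} {q : MCQuery n k}
    (h : ∀ j : Fin q.t, x q.i ⟨j, lt_of_lt_of_le j.isLt q.ht2⟩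
        = y q.i ⟨j, lt_of_lt_of_le j.isLt q.ht2⟩) :
    (mcXi x q ↔ mcXi y q) := by
  unfold mcXi
  constructor <;> intro hx j
  · rw [← h j]; exact hx j
  · rw [h j]; exact hx j

lemma mcFlip_xi_ne {n k : ℕ} {x : Fin n → Fin k → Bool} {p : Fin n × Fin k}
    {q : MCQuery n k} (h : ¬(mcXi x q ↔ mcXi (mcFlip x p) q)) :
    p.1 = q.i ∧ (p.2 : ℕ) < q.t := by
  by_contra hc
  apply h
  apply mcXi_iff_of_agree
  intro j
  have hne : ¬ (q.i = p.1 ∧ (⟨j, lt_of_lt_of_le j.isLt q.ht2⟩ : Fin k) = p.2) := by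
    rintro ⟨h1, h2⟩
    apply hc
    refine ⟨h1.symm, ?_⟩
    rw [← h2]
    exact j.isLt
  simp [mcFlip, hne]

lemma mcMu_eq_card {n k : ℕ} (x : Fin n → Fin k → Bool) :
    mcMu x = (Finset.univ.filter (fun y : Fin n → Fin k → Bool => mcHam x y = 1)).card := by
  unfold mcMu mcW
  rw [Finset.card_eq_sum_ones, Finset.sum_filter]

lemma mcNu_eq_card {n k : ℕ} (x : Fin n → Fin k → Bool) (q : MCQuery n k) :
    mcNu x q = (Finset.univ.filter (fun y : Fin n → Fin k → Bool =>
      mcHam x y = 1 ∧ ¬(mcXi x q ↔ mcXi y q))).card := by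
  unfold mcNu mcW'
  rw [Finset.card_eq_sum_ones, Finset.sum_filter]

lemma mcMu_eq {n k : ℕ} (x : Fin n → Fin k → Bool) : mcMu x = n * k := by
  rw [mcMu_eq_card]
  have : (Finset.univ.filter (fun y : Fin n → Fin k → Bool => mcHam x y = 1))
      = Finset.univ.image (mcFlip x) := by
    ext y
    simp only [Finset.mem_filter, Finset.mem_univ, true_and, Finset.mem_image,
      mcHam_one_iff]
    constructor
    · rintro ⟨p, rfl⟩; exact ⟨p, rfl⟩
    · rintro ⟨p, rfl⟩; exact ⟨p, rfl⟩
  rw [this, Finset.card_image_of_injective _ (mcFlip_inj x), Finset.card_univ]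
  simp

lemma mcNu_le_t {n k : ℕ} (x : Fin n → Fin k → Bool) (q : MCQuery n k) :
    mcNu x q ≤ q.t := by
  rw [mcNu_eq_card]
  have hsub : (Finset.univ.filter (fun y : Fin n → Fin k → Bool =>
      mcHam x y = 1 ∧ ¬(mcXi x q ↔ mcXi y q)))
      ⊆ Finset.univ.image (fun j : Fin q.t =>
        mcFlip x (q.i, ⟨j, lt_of_lt_of_le j.isLt q.ht2⟩)) := by
    intro y hy
    simp only [Finset.mem_filter, Finset.mem_univ, true_and] at hy
    obtain ⟨p, rfl⟩ := mcHam_one_iff.1 hy.1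
    obtain ⟨h1, h2⟩ := mcFlip_xi_ne hy.2
    simp only [Finset.mem_image, Finset.mem_univ, true_and]
    exact ⟨⟨p.2, h2⟩, by rw [← h1]⟩
  calc _ ≤ _ := Finset.card_le_card hsub
    _ ≤ (Finset.univ : Finset (Fin q.t)).card := Finset.card_image_le
    _ = q.t := by simp

lemma mcNu_le_k {n k : ℕ} (x : Fin n → Fin k → Bool) (q : MCQuery n k) :
    mcNu x q ≤ k := le_trans (mcNu_le_t x q) q.ht2

lemma mcNu_le_one {n k : ℕ} {x : Fin n → Fin k → Bool} {q : MCQuery n k}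
    (hx : ¬ mcXi x q) : mcNu x q ≤ 1 := by
  rw [mcNu_eq_card]
  apply Finset.card_le_one.2
  have key : ∀ y ∈ (Finset.univ.filter (fun y : Fin n → Fin k → Bool =>
      mcHam x y = 1 ∧ ¬(mcXi x q ↔ mcXi y q))),
      ∀ j : Fin q.t, x q.i ⟨j, lt_of_lt_of_le j.isLt q.ht2⟩ ≠ q.s j →
      y = mcFlip x (q.i, ⟨j, lt_of_lt_of_le j.isLt q.ht2⟩) := by
    intro y hy j hj
    simp only [Finset.mem_filter, Finset.mem_univ, true_and] at hy
    obtain ⟨p, rfl⟩ := mcHam_one_iff.1 hy.1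
    have hxiy : mcXi (mcFlip x p) q := by tauto
    have hdiff : mcFlip x p q.i ⟨j, lt_of_lt_of_le j.isLt q.ht2⟩
        ≠ x q.i ⟨j, lt_of_lt_of_le j.isLt q.ht2⟩ := by
      rw [hxiy j]; exact fun hh => hj hh.symm
    obtain ⟨h1, h2⟩ := mcFlip_ne hdiff
    have hp : p = (q.i, (⟨j, lt_of_lt_of_le j.isLt q.ht2⟩ : Fin k)) :=
      Prod.ext h1.symm h2.symm
    rw [hp]
  intro y hy z hz
  obtain ⟨j, hj⟩ : ∃ j : Fin q.t, x q.i ⟨j, lt_of_lt_of_le j.isLt q.ht2⟩ ≠ q.s j := by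
    by_contra hc
    push_neg at hc
    exact hx hc
  rw [key y hy j hj, key z hz j hj]

lemma one_le_mcNu {n k : ℕ} {x y : Fin n → Fin k → Bool} {q : MCQuery n k}
    (hy : mcHam x y = 1) (hxi : ¬(mcXi x q ↔ mcXi y q)) : 1 ≤ mcNu x q := by
  unfold mcNu
  have : mcW' x y q = 1 := by unfold mcW'; simp [hy, hxi]
  calc 1 = mcW' x y q := this.symm
    _ ≤ _ := Finset.single_le_sum (f := fun z => mcW' x z q)
      (fun _ _ => Nat.zero_le _) (Finset.mem_univ y)

lemma mcRatio_ge {n k : ℕ} (hk : 1 ≤ k) (x y : Fin n → Fin k → Bool) (q : MCQuery n k)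
    (hw : 0 < mcW x y) (hxi : ¬(mcXi x q ↔ mcXi y q)) :
    (n : ℝ) * Real.sqrt k ≤
      Real.sqrt (((mcMu x : ℝ) * (mcMu y : ℝ)) / ((mcNu x q : ℝ) * (mcNu y q : ℝ))) := by
  have hham : mcHam x y = 1 := by
    by_contra h; simp [mcW, h] at hw
  have hham' : mcHam y x = 1 := by rw [mcHam_comm]; exact hham
  have hνx1 : 1 ≤ mcNu x q := one_le_mcNu hham hxi
  have hνy1 : 1 ≤ mcNu y q := one_le_mcNu hham' (fun h => hxi h.symm)
  have hprod : mcNu x q * mcNu y q ≤ k := by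
    by_cases hx : mcXi x q
    · have hy : ¬ mcXi y q := by tauto
      calc mcNu x q * mcNu y q ≤ k * 1 :=
            Nat.mul_le_mul (mcNu_le_k x q) (mcNu_le_one hy)
        _ = k := by ring
    · calc mcNu x q * mcNu y q ≤ 1 * k :=
            Nat.mul_le_mul (mcNu_le_one hx) (mcNu_le_k y q)
        _ = k := by ring
  have hk0 : (0:ℝ) < (k:ℝ) := by exact_mod_cast Nat.lt_of_lt_of_le Nat.zero_lt_one hk
  have hA1 : (1:ℝ) ≤ (mcNu x q : ℝ) * (mcNu y q : ℝ) := by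
    have h2 := Nat.mul_le_mul hνx1 hνy1
    rw [one_mul] at h2
    exact_mod_cast h2
  have hA0 : (0:ℝ) < (mcNu x q : ℝ) * (mcNu y q : ℝ) := lt_of_lt_of_le one_pos hA1
  have hAk : (mcNu x q : ℝ) * (mcNu y q : ℝ) ≤ (k:ℝ) := by exact_mod_cast hprod
  rw [mcMu_eq x, mcMu_eq y]
  have hstep : (n:ℝ) * Real.sqrt k
      = Real.sqrt (((n*k : ℕ):ℝ) * ((n*k:ℕ):ℝ) / k) := by
    rw [show ((n*k:ℕ):ℝ) * ((n*k:ℕ):ℝ) / (k:ℝ) = (n:ℝ)^2 * k by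
      push_cast; field_simp]
    rw [Real.sqrt_mul (by positivity), Real.sqrt_sq (by positivity)]
  rw [hstep]
  apply Real.sqrt_le_sqrt
  gcongr

theorem stmt_14 (n k : ℕ) (hn : 1 ≤ n) (hk : 1 ≤ k) :
    (∀ x : Fin n → Fin k → Bool, mcMu x = n * k) ∧
    (∀ (x : Fin n → Fin k → Bool) (q : MCQuery n k), mcNu x q ≤ k) ∧
    (∀ (x y : Fin n → Fin k → Bool) (q : MCQuery n k),
      0 < mcW x y → ¬(mcXi x q ↔ mcXi y q) →
      (n : ℝ) * Real.sqrt k ≤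
        Real.sqrt (((mcMu x : ℝ) * (mcMu y : ℝ)) / ((mcNu x q : ℝ) * (mcNu y q : ℝ)))) ∧
    (∃ (x y : Fin n → Fin k → Bool) (q : MCQuery n k),
      0 < mcW x y ∧ ¬(mcXi x q ↔ mcXi y q) ∧
      Real.sqrt (((mcMu x : ℝ) * (mcMu y : ℝ)) / ((mcNu x q : ℝ) * (mcNu y q : ℝ)))
        = (n : ℝ) * Real.sqrt k) := by
  refine ⟨mcMu_eq, fun x q => mcNu_le_k x q, fun x y q => mcRatio_ge hk x y q, ?_⟩
  -- existence part
  set i0 : Fin n := ⟨0, hn⟩ with hi0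
  set j0 : Fin k := ⟨0, hk⟩ with hj0
  set x0 : Fin n → Fin k → Bool := fun _ _ => false with hx0
  set q0 : MCQuery n k := ⟨i0, k, hk, le_rfl, fun _ => false⟩ with hq0
  set y0 : Fin n → Fin k → Bool := mcFlip x0 (i0, j0) with hy0
  have hham : mcHam x0 y0 = 1 := mcHam_flip x0 (i0, j0)
  have hxx : mcXi x0 q0 := fun j => rfl
  have hxy : ¬ mcXi y0 q0 := by
    intro h
    have h2 := h j0
    simp [hy0, mcFlip, hq0] at h2
    change false = !false at h2
    simp at h2
  have hxi : ¬(mcXi x0 q0 ↔ mcXi y0 q0) := fun h => hxy (h.1 hxx)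
  have hw : 0 < mcW x0 y0 := by simp [mcW, hham]
  have hνy : mcNu y0 q0 = 1 := by
    apply le_antisymm (mcNu_le_one hxy)
    exact one_le_mcNu (by rw [mcHam_comm]; exact hham) (fun h => hxi h.symm)
  have hνx : mcNu x0 q0 = k := by
    apply le_antisymm (mcNu_le_k x0 q0)
    rw [mcNu_eq_card]
    have hinj : Function.Injective (fun j : Fin k => mcFlip x0 (i0, j)) := by
      intro a b hab
      have := mcFlip_inj x0 hab
      exact congrArg Prod.snd this
    have him : (Finset.univ.image (fun j : Fin k => mcFlip x0 (i0, j)))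
        ⊆ Finset.univ.filter (fun y : Fin n → Fin k → Bool =>
            mcHam x0 y = 1 ∧ ¬(mcXi x0 q0 ↔ mcXi y q0)) := by
      intro y hy
      simp only [Finset.mem_image, Finset.mem_univ, true_and] at hy
      obtain ⟨j, rfl⟩ := hy
      simp only [Finset.mem_filter, Finset.mem_univ, true_and]
      refine ⟨mcHam_flip _ _, ?_⟩
      intro hiff
      have hxiy : mcXi (mcFlip x0 (i0, j)) q0 := hiff.1 hxx
      have h2 := hxiy j
      simp [mcFlip, hq0] at h2
      change false = !false at h2
      simp at h2
    calc k = (Finset.univ.image (fun j : Fin k => mcFlip x0 (i0, j))).card := by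
          rw [Finset.card_image_of_injective _ hinj, Finset.card_univ, Fintype.card_fin]
      _ ≤ _ := Finset.card_le_card him
  refine ⟨x0, y0, q0, hw, hxi, ?_⟩
  rw [mcMu_eq, mcMu_eq, hνx, hνy]
  have hk0 : (0:ℝ) < (k:ℝ) := by exact_mod_cast Nat.lt_of_lt_of_le Nat.zero_lt_one hk
  rw [show ((n*k:ℕ):ℝ) * ((n*k:ℕ):ℝ) / (((k:ℕ):ℝ) * ((1:ℕ):ℝ)) = (n:ℝ)^2 * k by
    push_cast; field_simp]
  rw [Real.sqrt_mul (by positivity), Real.sqrt_sq (by positivity)]
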